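/- For the stochastic proximal gradient iterates with step size η = c/L, 0 < c < 1/2: ((1 - 2ηL)/(2η)) Σ_{t=0}^{T-1} ‖x_{t+1} - x_t‖² ≤ Δ + (1/(2L)) Σ_{t=0}^{T-1} ‖g_t - ∇f(x_t)‖². -/

import Mathlib

open RealInnerProductSpace Finset

theorem descent_lemma {d : ℕ} (f : EuclideanSpace ℝ (Fin d) → ℝ)
    (f' : EuclideanSpace ℝ (Fin d) → EuclideanSpace ℝ (Fin d)) (L : ℝ)
    (hdiff : ∀ x, HasGradientAt f (f' x) x)
    (hlip : ∀ x y, ‖f' x - f' y‖ ≤ L * ‖x - y‖)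
    (x y : EuclideanSpace ℝ (Fin d)) :
    f y ≤ f x + ⟪f' x, y - x⟫ + L / 2 * ‖y - x‖ ^ 2 := by
  set v := y - x with hv
  have hline : ∀ s : ℝ, HasDerivAt (fun s : ℝ => x + s • v) v s := fun s => by
    simpa using ((hasDerivAt_id s).smul_const v).const_add x
  have hg : ∀ s : ℝ, HasDerivAt (fun s : ℝ => f (x + s • v)) ⟪f' (x + s • v), v⟫ s := by
    intro s
    have := ((hdiff (x + s • v)).hasFDerivAt).comp_hasDerivAt s (hline s)
    simp at this; exact this
  set h : ℝ → ℝ := fun s => f (x + s • v) - s * ⟪f' x, v⟫ - L / 2 * s ^ 2 * ‖v‖ ^ 2 with hh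
  have hh' : ∀ s : ℝ, HasDerivAt h (⟪f' (x + s • v), v⟫ - ⟪f' x, v⟫ - L * s * ‖v‖ ^ 2) s := by
    intro s
    have h1 : HasDerivAt (fun s : ℝ => s * ⟪f' x, v⟫) ⟪f' x, v⟫ s := by
      simpa using (hasDerivAt_id s).mul_const ⟪f' x, v⟫
    have h2 : HasDerivAt (fun s : ℝ => L / 2 * s ^ 2 * ‖v‖ ^ 2) (L * s * ‖v‖ ^ 2) s := by
      have h2' := ((hasDerivAt_pow 2 s).const_mul (L / 2)).mul_const (‖v‖ ^ 2)
      refine h2'.congr_deriv ?_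
      push_cast; ring
    exact ((hg s).sub h1).sub h2
  have hanti : AntitoneOn h (Set.Icc (0:ℝ) 1) := by
    apply antitoneOn_of_deriv_nonpos (convex_Icc 0 1)
    · exact (continuous_iff_continuousAt.2 fun s => (hh' s).continuousAt).continuousOn
    · exact fun s _ => (hh' s).differentiableAt.differentiableWithinAt
    · intro s hs
      rw [interior_Icc] at hs
      rw [(hh' s).deriv]
      have key : ⟪f' (x + s • v), v⟫ - ⟪f' x, v⟫ ≤ L * s * ‖v‖ ^ 2 := by
        rw [← inner_sub_left]
        calc ⟪f' (x + s • v) - f' x, v⟫ ≤ ‖f' (x + s • v) - f' x‖ * ‖v‖ := real_inner_le_norm _ _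
          _ ≤ (L * ‖(x + s • v) - x‖) * ‖v‖ :=
              mul_le_mul_of_nonneg_right (hlip _ _) (norm_nonneg _)
          _ = L * s * ‖v‖ ^ 2 := by
              simp [norm_smul, abs_of_pos hs.1]; ring
      linarith
  have h10 := hanti (Set.left_mem_Icc.2 zero_le_one) (Set.right_mem_Icc.2 zero_le_one) zero_le_one
  simp only [hh, one_smul, zero_smul, add_zero, one_pow] at h10
  have hxy : x + v = y := by rw [hv]; abel
  rw [hxy] at h10
  linarith

/-- Telescoped bound for stochastic proximal gradient with `η = c/L`, `0 < c < 1/2`: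
`((1-2ηL)/(2η)) Σ_{t<T} ‖x_{t+1}-x_t‖² ≤ Δ + (1/(2L)) Σ_{t<T} ‖g_t - ∇f(x_t)‖²`. -/
theorem spg_telescoped_bound {d : ℕ} (f r : EuclideanSpace ℝ (Fin d) → ℝ)
    (f' : EuclideanSpace ℝ (Fin d) → EuclideanSpace ℝ (Fin d)) (L c η Δ : ℝ) (hL : 0 < L)
    (hc : 0 < c) (hc2 : c < 1 / 2) (hηdef : η = c / L)
    (hdiff : ∀ x, HasGradientAt f (f' x) x)
    (hlip : ∀ x y, ‖f' x - f' y‖ ≤ L * ‖x - y‖)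
    (x g : ℕ → EuclideanSpace ℝ (Fin d))
    (hmin : ∀ t, ∀ y, r (x (t + 1)) + ⟪g t, x (t + 1) - x t⟫ +
        1 / (2 * η) * ‖x (t + 1) - x t‖ ^ 2 ≤
      r y + ⟪g t, y - x t⟫ + 1 / (2 * η) * ‖y - x t‖ ^ 2)
    (xstar : EuclideanSpace ℝ (Fin d))
    (hstar : ∀ y, f xstar + r xstar ≤ f y + r y)
    (hΔ : (f (x 0) + r (x 0)) - (f xstar + r xstar) ≤ Δ) (T : ℕ) :
    (1 - 2 * η * L) / (2 * η) * ∑ t ∈ range T, ‖x (t + 1) - x t‖ ^ 2 ≤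
      Δ + 1 / (2 * L) * ∑ t ∈ range T, ‖g t - f' (x t)‖ ^ 2 := by
  have hη : 0 < η := hηdef ▸ div_pos hc hL
  set F : ℕ → ℝ := fun t => f (x t) + r (x t) with hF
  have step : ∀ t, (1 / (2 * η) - L) * ‖x (t + 1) - x t‖ ^ 2 ≤
      F t - F (t + 1) + 1 / (2 * L) * ‖g t - f' (x t)‖ ^ 2 := by
    intro t
    have h1 := hmin t (x t)
    simp only [sub_self, inner_zero_right, norm_zero] at h1
    have h2 := descent_lemma f f' L hdiff hlip (x t) (x (t + 1))
    have h3 : ⟪f' (x t) - g t, x (t + 1) - x t⟫ ≤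
        ‖g t - f' (x t)‖ * ‖x (t + 1) - x t‖ := by
      calc ⟪f' (x t) - g t, x (t + 1) - x t⟫ ≤ ‖f' (x t) - g t‖ * ‖x (t + 1) - x t‖ :=
            real_inner_le_norm _ _
        _ = ‖g t - f' (x t)‖ * ‖x (t + 1) - x t‖ := by rw [norm_sub_rev]
    have h4 : ‖g t - f' (x t)‖ * ‖x (t + 1) - x t‖ ≤
        1 / (2 * L) * ‖g t - f' (x t)‖ ^ 2 + L / 2 * ‖x (t + 1) - x t‖ ^ 2 := by
      have h2L : (0:ℝ) < 2 * L := by linarith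
      have key : ‖g t - f' (x t)‖ * ‖x (t + 1) - x t‖ ≤
          (‖g t - f' (x t)‖ ^ 2 + L ^ 2 * ‖x (t + 1) - x t‖ ^ 2) / (2 * L) :=
        (le_div_iff₀ h2L).2 (by nlinarith [sq_nonneg (‖g t - f' (x t)‖ - L * ‖x (t + 1) - x t‖)])
      have heq : (‖g t - f' (x t)‖ ^ 2 + L ^ 2 * ‖x (t + 1) - x t‖ ^ 2) / (2 * L) =
          1 / (2 * L) * ‖g t - f' (x t)‖ ^ 2 + L / 2 * ‖x (t + 1) - x t‖ ^ 2 := by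
        field_simp
      linarith [key, heq.le, heq.ge]
    have hinner : ⟪f' (x t), x (t + 1) - x t⟫ - ⟪g t, x (t + 1) - x t⟫ =
        ⟪f' (x t) - g t, x (t + 1) - x t⟫ := (inner_sub_left _ _ _).symm
    simp only [hF]
    nlinarith [h1, h2, h3, h4, hinner]
  have hcoef : (1 - 2 * η * L) / (2 * η) = 1 / (2 * η) - L := by
    field_simp
  rw [hcoef, mul_sum]
  calc ∑ t ∈ range T, (1 / (2 * η) - L) * ‖x (t + 1) - x t‖ ^ 2
      ≤ ∑ t ∈ range T, (F t - F (t + 1) + 1 / (2 * L) * ‖g t - f' (x t)‖ ^ 2) :=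
        sum_le_sum fun t _ => step t
    _ = (F 0 - F T) + 1 / (2 * L) * ∑ t ∈ range T, ‖g t - f' (x t)‖ ^ 2 := by
        rw [sum_add_distrib, sum_range_sub' F T, mul_sum]
    _ ≤ Δ + 1 / (2 * L) * ∑ t ∈ range T, ‖g t - f' (x t)‖ ^ 2 := by
        have := hstar (x T)
        have : F 0 - F T ≤ Δ := by simp only [hF] at *; linarith
        linarith
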